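/- arXiv:1403.3469 — 2 statements merged into one kernel-verified Lean document; each statement's English description precedes it below -/
import Mathlib

section
/- Let (Ω, 𝓕, P) be a probability space, let U_1, …, U_N be fixed unitary ℓ×ℓ complex matrices, and let Ũ_1, …, Ũ_N : Ω → M_ℓ(ℂ) be measurable random matrices that are almost surely unitary. Suppose that for every p the mean-square machine error satisfies E[‖U_p − Ũ_p‖²] ≤ ℓ ε_m², where ‖·‖ is the spectral norm and ε_m ≥ 0. Then the error ε := ‖U_N ⋯ U_1 − Ũ_N ⋯ Ũ_1‖ satisfies √(E[ε²]) ≤ N ε_m √ℓ; in particular its standard deviation satisfies σ(ε) ≤ N ε_m √ℓ. -/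
open MeasureTheory ProbabilityTheory
open scoped Matrix.Norms.L2Operator

/-- Matrices inherit the product measurable-space structure (entrywise). -/
noncomputable instance matrixMeasurableSpace {l : ℕ} : MeasurableSpace (Matrix (Fin l) (Fin l) ℂ) :=
  inferInstanceAs (MeasurableSpace ((Fin l) → (Fin l) → ℂ))

/-- The ordered product `U_{n} U_{n-1} ⋯ U_1` of matrices (written with 0-based
indices), where the factor with the largest index acts last (leftmost). -/
noncomputable def mprod {l : ℕ} (U : ℕ → Matrix (Fin l) (Fin l) ℂ) :
    ℕ → Matrix (Fin l) (Fin l) ℂ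
  | 0 => 1
  | n + 1 => U n * mprod U n

lemma aux_norm_one_le (l : ℕ) : ‖(1 : Matrix (Fin l) (Fin l) ℂ)‖ ≤ 1 := by
  rcases subsingleton_or_nontrivial (Matrix (Fin l) (Fin l) ℂ) with h | h
  · simp [Subsingleton.elim (1 : Matrix (Fin l) (Fin l) ℂ) 0]
  · exact le_of_eq norm_one

lemma aux_unitary_norm_le {l : ℕ} {u : Matrix (Fin l) (Fin l) ℂ}
    (hu : u ∈ Matrix.unitaryGroup (Fin l) ℂ) : ‖u‖ ≤ 1 := by
  have h2 : ‖u‖ * ‖u‖ ≤ 1 := by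
    rw [← Matrix.l2_opNorm_conjTranspose_mul_self u]
    have h3 : Matrix.conjTranspose u * u = 1 := hu.1
    rw [h3]; exact aux_norm_one_le l
  nlinarith [norm_nonneg u]

lemma aux_mprod_norm_le {l : ℕ} (A : ℕ → Matrix (Fin l) (Fin l) ℂ) (n : ℕ)
    (h : ∀ p < n, ‖A p‖ ≤ 1) : ‖mprod A n‖ ≤ 1 := by
  induction n with
  | zero => exact aux_norm_one_le l
  | succ m ih =>
    have h1 : ‖mprod A m‖ ≤ 1 := ih fun p hp => h p (hp.trans m.lt_succ_self)
    have h2 : ‖A m‖ ≤ 1 := h m m.lt_succ_self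
    calc ‖mprod A (m+1)‖ = ‖A m * mprod A m‖ := rfl
      _ ≤ ‖A m‖ * ‖mprod A m‖ := norm_mul_le _ _
      _ ≤ 1 := by nlinarith [norm_nonneg (A m), norm_nonneg (mprod A m)]

lemma aux_telescope {l : ℕ} (A B : ℕ → Matrix (Fin l) (Fin l) ℂ) (n : ℕ)
    (hA : ∀ p < n, ‖A p‖ ≤ 1) (hB : ∀ p < n, ‖B p‖ ≤ 1) :
    ‖mprod A n - mprod B n‖ ≤ ∑ p ∈ Finset.range n, ‖A p - B p‖ := by
  induction n with
  | zero => simp [mprod]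
  | succ m ih =>
    have hA' : ∀ p < m, ‖A p‖ ≤ 1 := fun p hp => hA p (hp.trans m.lt_succ_self)
    have hB' : ∀ p < m, ‖B p‖ ≤ 1 := fun p hp => hB p (hp.trans m.lt_succ_self)
    have hPA : ‖mprod A m‖ ≤ 1 := aux_mprod_norm_le A m hA'
    have key : mprod A (m+1) - mprod B (m+1)
        = (A m - B m) * mprod A m + B m * (mprod A m - mprod B m) := by
      show A m * mprod A m - B m * mprod B m = _
      noncomm_ring
    rw [key, Finset.sum_range_succ]
    have h1 : ‖(A m - B m) * mprod A m‖ ≤ ‖A m - B m‖ := by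
      calc ‖(A m - B m) * mprod A m‖ ≤ ‖A m - B m‖ * ‖mprod A m‖ := norm_mul_le _ _
        _ ≤ ‖A m - B m‖ * 1 := by
            exact mul_le_mul_of_nonneg_left hPA (norm_nonneg _)
        _ = ‖A m - B m‖ := mul_one _
    have h2 : ‖B m * (mprod A m - mprod B m)‖ ≤ ∑ p ∈ Finset.range m, ‖A p - B p‖ := by
      calc ‖B m * (mprod A m - mprod B m)‖ ≤ ‖B m‖ * ‖mprod A m - mprod B m‖ := norm_mul_le _ _
        _ ≤ 1 * ‖mprod A m - mprod B m‖ :=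
            mul_le_mul_of_nonneg_right (hB m m.lt_succ_self) (norm_nonneg _)
        _ = ‖mprod A m - mprod B m‖ := one_mul _
        _ ≤ _ := ih hA' hB'
    calc ‖_ + _‖ ≤ _ + _ := norm_add_le _ _
      _ ≤ _ := by linarith

lemma aux_measurable_norm {l : ℕ} : Measurable fun M : Matrix (Fin l) (Fin l) ℂ => ‖M‖ := by
  have hb : BorelSpace (Matrix (Fin l) (Fin l) ℂ) :=
    inferInstanceAs (BorelSpace ((Fin l) → (Fin l) → ℂ))
  exact (continuous_norm (E := Matrix (Fin l) (Fin l) ℂ)).measurable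

lemma aux_measurable_entry {Ω : Type*} [MeasurableSpace Ω] {l : ℕ}
    {V : Ω → Matrix (Fin l) (Fin l) ℂ} (h : Measurable V) (i j : Fin l) :
    Measurable fun ω => V ω i j :=
  (measurable_pi_apply j).comp ((measurable_pi_apply i).comp h)

lemma aux_measurable_of_entries {Ω : Type*} [MeasurableSpace Ω] {l : ℕ}
    {V : Ω → Matrix (Fin l) (Fin l) ℂ} (h : ∀ i j, Measurable fun ω => V ω i j) :
    Measurable V :=
  measurable_pi_lambda _ fun i => measurable_pi_lambda _ fun j => h i j

lemma aux_measurable_const_sub {Ω : Type*} [MeasurableSpace Ω] {l : ℕ}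
    (C : Matrix (Fin l) (Fin l) ℂ) {B : Ω → Matrix (Fin l) (Fin l) ℂ} (hB : Measurable B) :
    Measurable fun ω => C - B ω := by
  apply aux_measurable_of_entries
  intro i j
  simp only [Matrix.sub_apply]
  exact measurable_const.sub (aux_measurable_entry hB i j)

lemma aux_measurable_mul {Ω : Type*} [MeasurableSpace Ω] {l : ℕ}
    {A B : Ω → Matrix (Fin l) (Fin l) ℂ} (hA : Measurable A) (hB : Measurable B) :
    Measurable fun ω => A ω * B ω := by
  apply aux_measurable_of_entries
  intro i j
  simp only [Matrix.mul_apply]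
  exact Finset.measurable_sum _ fun k _ =>
    (aux_measurable_entry hA i k).mul (aux_measurable_entry hB k j)

lemma aux_measurable_mprod {Ω : Type*} [MeasurableSpace Ω] {l : ℕ}
    (V : ℕ → Ω → Matrix (Fin l) (Fin l) ℂ) (N : ℕ) (h : ∀ p < N, Measurable (V p)) :
    Measurable fun ω => mprod (fun p => V p ω) N := by
  induction N with
  | zero => exact measurable_const
  | succ m ih =>
    exact aux_measurable_mul (h m m.lt_succ_self)
      (ih fun p hp => h p (hp.trans m.lt_succ_self))

/-- Let `(Ω, 𝓕, P)` be a probability space, `U_1, …, U_N` fixed unitary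
`ℓ×ℓ` complex matrices and `Ũ_1, …, Ũ_N : Ω → M_ℓ(ℂ)` measurable random matrices that are
almost surely unitary. If the mean-square machine error satisfies
`E[‖U_p − Ũ_p‖²] ≤ ℓ ε_m²` (spectral norm) for every `p`, then the error
`ε := ‖U_N ⋯ U_1 − Ũ_N ⋯ Ũ_1‖` satisfies `√(E[ε²]) ≤ N ε_m √ℓ`; in particular its
standard deviation satisfies `σ(ε) ≤ N ε_m √ℓ`. -/
theorem unitary_random_product_error {Ω : Type*} [MeasurableSpace Ω]
    (P : Measure Ω) [IsProbabilityMeasure P]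
    {l N : ℕ} (εm : ℝ) (hεm : 0 ≤ εm)
    (U : ℕ → Matrix (Fin l) (Fin l) ℂ)
    (V : ℕ → Ω → Matrix (Fin l) (Fin l) ℂ)
    (hU : ∀ p < N, U p ∈ Matrix.unitaryGroup (Fin l) ℂ)
    (hVmeas : ∀ p < N, Measurable (V p))
    (hVunit : ∀ p < N, ∀ᵐ ω ∂P, V p ω ∈ Matrix.unitaryGroup (Fin l) ℂ)
    (herr : ∀ p < N, ∫ ω, ‖U p - V p ω‖ ^ 2 ∂P ≤ (l : ℝ) * εm ^ 2) :
    Real.sqrt (∫ ω, ‖mprod U N - mprod (fun p => V p ω) N‖ ^ 2 ∂P) ≤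
        (N : ℝ) * εm * Real.sqrt l ∧
      Real.sqrt (variance (fun ω => ‖mprod U N - mprod (fun p => V p ω) N‖) P) ≤
        (N : ℝ) * εm * Real.sqrt l := by
  set f : Ω → ℝ := fun ω => ‖mprod U N - mprod (fun p => V p ω) N‖ with hf
  set g : ℕ → Ω → ℝ := fun p ω => ‖U p - V p ω‖ with hg
  -- measurability
  have hfm : Measurable f := by
    apply aux_measurable_norm.comp
    exact aux_measurable_const_sub _ (aux_measurable_mprod V N hVmeas)
  have hgm : ∀ p < N, Measurable (g p) := fun p hp =>
    aux_measurable_norm.comp (aux_measurable_const_sub _ (hVmeas p hp))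
  -- a.e. all unitary
  have hae : ∀ᵐ ω ∂P, ∀ p, p < N → V p ω ∈ Matrix.unitaryGroup (Fin l) ℂ := by
    rw [ae_all_iff]
    intro p
    by_cases hp : p < N
    · filter_upwards [hVunit p hp] with ω h _; exact h
    · filter_upwards with ω h; exact absurd h hp
  -- integrability of each g p ^ 2
  have hgint : ∀ p < N, Integrable (fun ω => g p ω ^ 2) P := by
    intro p hp
    refine Integrable.mono' (integrable_const (4 : ℝ))
      (((hgm p hp).pow_const 2).aestronglyMeasurable) ?_
    filter_upwards [hVunit p hp] with ω hω
    have h1 : g p ω ≤ 2 := by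
      calc g p ω ≤ ‖U p‖ + ‖V p ω‖ := norm_sub_le _ _
        _ ≤ 1 + 1 := add_le_add (aux_unitary_norm_le (hU p hp)) (aux_unitary_norm_le hω)
        _ = 2 := by norm_num
    have h0 : 0 ≤ g p ω := norm_nonneg _
    have : g p ω ^ 2 ≤ 4 := by nlinarith
    simpa [abs_of_nonneg (sq_nonneg (g p ω))] using this
  -- the dominating function
  have hGint : Integrable (fun ω => (N : ℝ) * ∑ p ∈ Finset.range N, g p ω ^ 2) P :=
    (integrable_finset_sum _ fun p hp => hgint p (Finset.mem_range.mp hp)).const_mul _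
  -- pointwise bound
  have hptw : ∀ᵐ ω ∂P, f ω ^ 2 ≤ (N : ℝ) * ∑ p ∈ Finset.range N, g p ω ^ 2 := by
    filter_upwards [hae] with ω hω
    have h1 : f ω ≤ ∑ p ∈ Finset.range N, g p ω :=
      aux_telescope U (fun p => V p ω) N
        (fun p hp => aux_unitary_norm_le (hU p hp))
        (fun p hp => aux_unitary_norm_le (hω p hp))
    have h2 : f ω ^ 2 ≤ (∑ p ∈ Finset.range N, g p ω) ^ 2 :=
      pow_le_pow_left₀ (norm_nonneg _) h1 2
    have h3 : (∑ p ∈ Finset.range N, g p ω) ^ 2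
        ≤ (N : ℝ) * ∑ p ∈ Finset.range N, g p ω ^ 2 := by
      simpa using sq_sum_le_card_mul_sum_sq (s := Finset.range N) (f := fun p => g p ω)
    linarith
  -- integral bound
  have hIbound : ∫ ω, f ω ^ 2 ∂P ≤ (N : ℝ) ^ 2 * εm ^ 2 * l := by
    have step1 : ∫ ω, f ω ^ 2 ∂P ≤ ∫ ω, (N : ℝ) * ∑ p ∈ Finset.range N, g p ω ^ 2 ∂P :=
      integral_mono_of_nonneg (Filter.Eventually.of_forall fun ω => sq_nonneg _) hGint hptw
    have step2 : ∫ ω, (N : ℝ) * ∑ p ∈ Finset.range N, g p ω ^ 2 ∂P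
        = (N : ℝ) * ∑ p ∈ Finset.range N, ∫ ω, g p ω ^ 2 ∂P := by
      rw [integral_const_mul, integral_finset_sum _
        fun p hp => hgint p (Finset.mem_range.mp hp)]
    have step3 : ∑ p ∈ Finset.range N, ∫ ω, g p ω ^ 2 ∂P ≤ (N : ℝ) * ((l : ℝ) * εm ^ 2) := by
      calc ∑ p ∈ Finset.range N, ∫ ω, g p ω ^ 2 ∂P
          ≤ ∑ _p ∈ Finset.range N, (l : ℝ) * εm ^ 2 :=
            Finset.sum_le_sum fun p hp => herr p (Finset.mem_range.mp hp)
        _ = (N : ℝ) * ((l : ℝ) * εm ^ 2) := by simp [mul_comm]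
    have hN : (0 : ℝ) ≤ N := Nat.cast_nonneg N
    calc ∫ ω, f ω ^ 2 ∂P ≤ (N : ℝ) * ((N : ℝ) * ((l : ℝ) * εm ^ 2)) := by
          rw [step2] at step1
          exact step1.trans (mul_le_mul_of_nonneg_left step3 hN)
      _ = (N : ℝ) ^ 2 * εm ^ 2 * l := by ring
  have hsq : ((N : ℝ) * εm * Real.sqrt l) ^ 2 = (N : ℝ) ^ 2 * εm ^ 2 * l := by
    rw [mul_pow, mul_pow, Real.sq_sqrt (Nat.cast_nonneg l)]
  have hRnn : 0 ≤ (N : ℝ) * εm * Real.sqrt l := by positivity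
  have first : Real.sqrt (∫ ω, f ω ^ 2 ∂P) ≤ (N : ℝ) * εm * Real.sqrt l := by
    have := Real.sqrt_le_sqrt (hIbound.trans_eq hsq.symm)
    rwa [Real.sqrt_sq hRnn] at this
  refine ⟨first, ?_⟩
  have hvar : variance f P ≤ ∫ ω, f ω ^ 2 ∂P := by
    have := variance_le_expectation_sq (μ := P) hfm.aestronglyMeasurable
    simpa [Pi.pow_apply] using this
  calc Real.sqrt (variance f P) ≤ Real.sqrt (∫ ω, f ω ^ 2 ∂P) := Real.sqrt_le_sqrt hvar
    _ ≤ _ := first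
end

section
/- Let s² > 0 and let Z be a real-valued random variable distributed as the real Gaussian with mean 0 and variance s². Then the error variable ε = |1 − e^{Z}| satisfies the variance lower bound Var(ε) ≥ e^{2s²} − e^{s²} − 2 e^{s²/2} + 1. In particular, taking s² = N ε_m², the standard deviation of the error of a product of N log-normally modeled factors with machine epsilon ε_m diverges exponentially with N. -/
open MeasureTheory ProbabilityTheory Real

lemma gauss_pdf_mul_exp (t : ℝ) {v : NNReal} (hv : v ≠ 0) (x : ℝ) :
    gaussianPDFReal 0 v x * Real.exp (t * x)
      = Real.exp (t ^ 2 * v / 2) * gaussianPDFReal (t * v) v x := by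
  have hv' : (v : ℝ) ≠ 0 := by exact_mod_cast hv
  simp only [gaussianPDFReal]
  have h : -(x - 0) ^ 2 / (2 * (v : ℝ)) + t * x
      = t ^ 2 * (v : ℝ) / 2 + -(x - t * (v : ℝ)) ^ 2 / (2 * (v : ℝ)) := by
    field_simp
    ring
  rw [mul_assoc, ← Real.exp_add, h, Real.exp_add, ← mul_assoc,
    mul_comm ((√(2 * π * (v : ℝ)))⁻¹) (rexp (t ^ 2 * (v : ℝ) / 2)), mul_assoc]

lemma integrable_exp_gaussianReal (t : ℝ) {v : NNReal} (hv : v ≠ 0) :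
    Integrable (fun x => Real.exp (t * x)) (gaussianReal 0 v) := by
  rw [gaussianReal_of_var_ne_zero _ hv, integrable_withDensity_iff (measurable_gaussianPDF 0 v)
    (ae_of_all _ fun x => ENNReal.ofReal_lt_top)]
  have : (fun x => Real.exp (t * x) * (gaussianPDF 0 v x).toReal)
      = fun x => Real.exp (t ^ 2 * v / 2) * gaussianPDFReal (t * v) v x := by
    ext x
    rw [gaussianPDF, ENNReal.toReal_ofReal (gaussianPDFReal_nonneg 0 v x), mul_comm,
      gauss_pdf_mul_exp t hv x]
  rw [this]
  exact (integrable_gaussianPDFReal _ _).const_mul _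

lemma integral_exp_gaussianReal (t : ℝ) {v : NNReal} (hv : v ≠ 0) :
    ∫ x, Real.exp (t * x) ∂(gaussianReal 0 v) = Real.exp (t ^ 2 * v / 2) := by
  rw [gaussianReal_of_var_ne_zero _ hv]
  have h1 : gaussianPDF 0 v = fun x => ((gaussianPDFReal 0 v x).toNNReal : ENNReal) := by
    ext x; rw [gaussianPDF, ENNReal.ofReal]
  rw [h1, integral_withDensity_eq_integral_smul
    (by exact (measurable_gaussianPDFReal 0 v).real_toNNReal) _]
  have : (fun x => (gaussianPDFReal 0 v x).toNNReal • Real.exp (t * x))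
      = fun x => Real.exp (t ^ 2 * v / 2) * gaussianPDFReal (t * v) v x := by
    ext x
    rw [NNReal.smul_def, smul_eq_mul, Real.coe_toNNReal _ (gaussianPDFReal_nonneg 0 v x),
      gauss_pdf_mul_exp t hv x]
  rw [this, integral_const_mul, integral_gaussianPDFReal_eq_one _ hv, mul_one]

lemma gaussianReal_Iio_zero {v : NNReal} (hv : v ≠ 0) :
    (gaussianReal 0 v) (Set.Iio (0 : ℝ)) = 1 / 2 := by
  have hsymm : (gaussianReal 0 v).map ((-1 : ℝ) * ·) = gaussianReal 0 v := by
    rw [gaussianReal_map_const_mul (-1 : ℝ)]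
    norm_num
  have hIoi : (gaussianReal 0 v) (Set.Ioi (0 : ℝ)) = (gaussianReal 0 v) (Set.Iio (0 : ℝ)) := by
    conv_lhs => rw [← hsymm]
    rw [Measure.map_apply (measurable_const_mul _) measurableSet_Ioi]
    congr 1
    ext x
    simp [neg_pos]
  have hzero : (gaussianReal 0 v) ({0} : Set ℝ) = 0 := by
    refine (gaussianReal_absolutelyContinuous 0 hv) ?_
    simp
  have h2 : (gaussianReal 0 v) (Set.Ici (0 : ℝ)) = (gaussianReal 0 v) (Set.Ioi (0 : ℝ)) := by
    rw [← Set.Ioi_union_left, measure_union (by simp) (measurableSet_singleton 0), hzero, add_zero]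
  have h1 : (gaussianReal 0 v) (Set.Iio (0 : ℝ)) + (gaussianReal 0 v) (Set.Ici (0 : ℝ)) = 1 := by
    rw [← measure_union (Set.Iio_disjoint_Ici le_rfl) measurableSet_Ici, Set.Iio_union_Ici]
    exact measure_univ
  rw [h2, hIoi, ← two_mul] at h1
  rw [ENNReal.eq_div_iff (by norm_num) (by norm_num)]
  exact h1


/-- Let `s² > 0` and let `Z` be a real random variable distributed as
the real Gaussian with mean `0` and variance `s²`. Then the error variable
`ε = |1 − e^Z|` satisfies the variance lower bound
`Var(ε) ≥ e^{2s²} − e^{s²} − 2 e^{s²/2} + 1`. (Taking `s² = N ε_m²`, the standard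
deviation of the error of a product of `N` log-normally modeled factors with machine
epsilon `ε_m` diverges exponentially with `N`.) -/
theorem lognormal_error_variance_lower_bound {Ω : Type*} [MeasurableSpace Ω]
    (P : Measure Ω) [IsProbabilityMeasure P]
    (v : NNReal) (hv : 0 < v) (Z : Ω → ℝ) (hZ : Measurable Z)
    (hdist : P.map Z = gaussianReal 0 v) :
    Real.exp (2 * (v : ℝ)) - Real.exp ((v : ℝ)) - 2 * Real.exp ((v : ℝ) / 2) + 1 ≤
      variance (fun ω => |1 - Real.exp (Z ω)|) P := by
  have hv' : v ≠ 0 := hv.ne'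
  -- exponential moments
  have key : ∀ t : ℝ, Integrable (fun ω => Real.exp (t * Z ω)) P ∧
      ∫ ω, Real.exp (t * Z ω) ∂P = Real.exp (t ^ 2 * v / 2) := by
    intro t
    have hg : AEStronglyMeasurable (fun x => Real.exp (t * x)) (P.map Z) :=
      (Real.measurable_exp.comp (measurable_const_mul t)).aestronglyMeasurable
    constructor
    · exact (integrable_map_measure hg hZ.aemeasurable).mp
        (hdist ▸ integrable_exp_gaussianReal t hv')
    · rw [← integral_exp_gaussianReal t hv', ← hdist, integral_map hZ.aemeasurable hg]
  have hint1 : Integrable (fun ω => Real.exp (Z ω)) P := by simpa using (key 1).1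
  have hI1 : ∫ ω, Real.exp (Z ω) ∂P = Real.exp ((v : ℝ) / 2) := by
    have := (key 1).2; simpa using this
  have hint2 : Integrable (fun ω => Real.exp (2 * Z ω)) P := (key 2).1
  have hI2 : ∫ ω, Real.exp (2 * Z ω) ∂P = Real.exp (2 * (v : ℝ)) := by
    have := (key 2).2
    rwa [show (2 : ℝ) ^ 2 * v / 2 = 2 * v by ring] at this
  have he : ∀ a : ℝ, Real.exp a ^ 2 = Real.exp (2 * a) := fun a => by
    rw [two_mul, Real.exp_add, sq]
  -- Memℒp 2
  have hexp2 : MemLp (fun ω => Real.exp (Z ω)) 2 P := by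
    rw [memLp_two_iff_integrable_sq (hZ.exp).aestronglyMeasurable]
    simpa [he] using hint2
  have hY : MemLp (fun ω => |1 - Real.exp (Z ω)|) 2 P := by
    have h := ((memLp_const (1 : ℝ)).sub hexp2).norm
    simpa [Real.norm_eq_abs] using h
  -- second moment
  have hEY2 : ∫ ω, |1 - Real.exp (Z ω)| ^ 2 ∂P
      = 1 - 2 * Real.exp ((v : ℝ) / 2) + Real.exp (2 * (v : ℝ)) := by
    have hsq : (fun ω => |1 - Real.exp (Z ω)| ^ 2)
        = fun ω => 1 - 2 * Real.exp (Z ω) + Real.exp (2 * Z ω) := by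
      ext ω
      rw [sq_abs, sub_sq, one_pow, mul_one, he]
    have hA : Integrable (fun ω => 1 - 2 * Real.exp (Z ω)) P := by
      exact (integrable_const 1).sub (hint1.const_mul 2)
    rw [hsq, integral_add hA hint2,
      integral_sub (integrable_const 1) (hint1.const_mul 2), integral_const,
      integral_const_mul, hI1, hI2]
    simp
  -- P(Z < 0) = 1/2
  have hmeasZ : MeasurableSet {ω | Z ω < 0} := hZ measurableSet_Iio
  have hPZ : P {ω | Z ω < 0} = 1 / 2 := by
    have : P {ω | Z ω < 0} = (P.map Z) (Set.Iio 0) := by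
      rw [Measure.map_apply hZ measurableSet_Iio]; rfl
    rw [this, hdist, gaussianReal_Iio_zero hv']
  -- first moment bound
  have hmean : ∫ ω, |1 - Real.exp (Z ω)| ∂P ≤ Real.exp ((v : ℝ) / 2) := by
    have hind : Integrable (fun ω => ({ω | Z ω < 0}).indicator (fun _ => (2 : ℝ)) ω) P :=
      (integrable_const (2 : ℝ)).indicator hmeasZ
    have hbound : ∀ ω, |1 - Real.exp (Z ω)|
        ≤ Real.exp (Z ω) - 1 + ({ω | Z ω < 0}).indicator (fun _ => (2 : ℝ)) ω := by
      intro ω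
      by_cases h : Z ω < 0
      · rw [Set.indicator_of_mem (show ω ∈ {ω | Z ω < 0} from h) (fun _ => (2:ℝ))]
        have := (Real.exp_pos (Z ω)).le
        rw [abs_sub_comm]
        calc |Real.exp (Z ω) - 1| ≤ |Real.exp (Z ω)| + |1| := abs_sub _ _
          _ ≤ Real.exp (Z ω) - 1 + 2 := by
            rw [abs_of_nonneg this, abs_one]; linarith
      · rw [Set.indicator_of_notMem (show ω ∉ {ω | Z ω < 0} from h) (fun _ => (2:ℝ)), add_zero]
        have h1 : (1 : ℝ) ≤ Real.exp (Z ω) := by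
          rw [← Real.exp_zero]; exact Real.exp_le_exp.mpr (not_lt.mp h)
        rw [abs_of_nonpos (by linarith)]
        linarith
    have hB : Integrable (fun ω => Real.exp (Z ω) - 1) P := by
      exact hint1.sub (integrable_const 1)
    calc ∫ ω, |1 - Real.exp (Z ω)| ∂P
        ≤ ∫ ω, (Real.exp (Z ω) - 1 + ({ω | Z ω < 0}).indicator (fun _ => (2 : ℝ)) ω) ∂P :=
          integral_mono (hY.integrable one_le_two) (hB.add hind) hbound
      _ = Real.exp ((v : ℝ) / 2) := by
          rw [integral_add hB hind,
            integral_sub hint1 (integrable_const 1), hI1, integral_const,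
            integral_indicator_const _ hmeasZ, measureReal_def, measureReal_def, hPZ]
          simp
  have hmean0 : 0 ≤ ∫ ω, |1 - Real.exp (Z ω)| ∂P := integral_nonneg fun ω => abs_nonneg _
  rw [variance_eq_sub hY]
  have hsq2 : (∫ ω, |1 - Real.exp (Z ω)| ∂P) ^ 2 ≤ Real.exp ((v : ℝ) / 2) ^ 2 :=
    pow_le_pow_left₀ hmean0 hmean 2
  rw [he ((v:ℝ)/2)] at hsq2
  have hfix : (2 : ℝ) * ((v : ℝ) / 2) = (v : ℝ) := by ring
  rw [hfix] at hsq2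
  simp only [Pi.pow_apply]
  rw [hEY2]
  linarith
end
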